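/- Let 0 < a < 1, c > 0, l ∈ ℝ and ε > 0. Let g : (l, l+ε] → ℝ be continuously differentiable with |g'(x)| ≥ c·(x−l)^{−(1+a)} for all x ∈ (l, l+ε]. Then there exists δ ∈ (0, ε] such that |g(x)| ≥ (c/(2a))·(x−l)^{−a} for all x ∈ (l, l+δ]. -/

import Mathlib

lemma stmt_4_aux (a c l ε : ℝ) (ha0 : 0 < a) (hc : 0 < c) (hε : 0 < ε)
    (g g' : ℝ → ℝ)
    (hderiv : ∀ x ∈ Set.Ioc l (l + ε), HasDerivWithinAt g (g' x) (Set.Ioc l (l + ε)) x)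
    (hlow : ∀ x ∈ Set.Ioc l (l + ε), c * (x - l) ^ (-(1 + a)) ≤ g' x) :
    ∃ δ : ℝ, 0 < δ ∧ δ ≤ ε ∧
      ∀ x ∈ Set.Ioc l (l + δ), c / (2 * a) * (x - l) ^ (-a) ≤ |g x| := by
  set s := Set.Ioc l (l + ε) with hs
  set F : ℝ → ℝ := fun t => g t + c / a * (t - l) ^ (-a) with hF
  -- derivative of F within s
  have hFderiv : ∀ t ∈ s, HasDerivWithinAt F (g' t - c * (t - l) ^ (-a - 1)) s t := by
    intro t ht
    have htl : 0 < t - l := sub_pos.mpr ht.1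
    have h1 : HasDerivAt (fun u : ℝ => (u - l) ^ (-a)) (-a * (t - l) ^ (-a - 1)) t := by
      have h2 : HasDerivAt (fun u : ℝ => u - l) 1 t := (hasDerivAt_id t).sub_const l
      have h3 := (Real.hasDerivAt_rpow_const (x := t - l) (p := -a) (Or.inl htl.ne')).comp t h2
      simpa [Function.comp_def] using h3
    have := (hderiv t ht).add ((h1.const_mul (c / a)).hasDerivWithinAt)
    have heq : g' t + c / a * (-a * (t - l) ^ (-a - 1)) = g' t - c * (t - l) ^ (-a - 1) := by
      field_simp
      ring
    rw [heq] at this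
    exact this
  have hmono : MonotoneOn F s := by
    apply monotoneOn_of_hasDerivWithinAt_nonneg (convex_Ioc l (l + ε))
      (f' := fun t => g' t - c * (t - l) ^ (-a - 1))
    · exact fun t ht => (hFderiv t ht).continuousWithinAt
    · intro t ht
      exact ((hFderiv t (interior_subset ht)).mono interior_subset)
    · intro t ht
      rw [interior_Ioc] at ht
      have ht' : t ∈ s := Set.Ioo_subset_Ioc_self ht
      have := hlow t ht'
      have heq : -(1 + a) = -a - 1 := by ring
      rw [heq] at this
      linarith
  set B := |g (l + ε)| with hB
  set E := ε ^ (-a) with hE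
  have hEpos : 0 < E := Real.rpow_pos_of_pos hε _
  set K := 2 * E + 2 * a / c * B with hK
  have hKpos : 0 < K := by positivity
  refine ⟨min ε (K ^ (-1 / a)), lt_min hε (Real.rpow_pos_of_pos hKpos _), min_le_left _ _, ?_⟩
  intro x hx
  have hxl : 0 < x - l := sub_pos.mpr hx.1
  have hxε : x ∈ s := ⟨hx.1, hx.2.trans (by linarith [min_le_left ε (K ^ (-1 / a))])⟩
  have hy : l + ε ∈ s := ⟨by linarith, le_refl _⟩
  have hFle : F x ≤ F (l + ε) := hmono hxε hy hxε.2
  set P := (x - l) ^ (-a) with hP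
  have hPK : K ≤ P := by
    have hxd : x - l ≤ K ^ (-1 / a) := by
      have := hx.2
      have := min_le_right ε (K ^ (-1 / a))
      linarith
    have h4 : (K ^ (-1 / a)) ^ (-a) ≤ (x - l) ^ (-a) :=
      Real.rpow_le_rpow_of_nonpos hxl hxd (by linarith)
    calc K = K ^ ((-1 / a) * (-a)) := by
            rw [show (-1 / a) * (-a) = 1 by field_simp, Real.rpow_one]
      _ = (K ^ (-1 / a)) ^ (-a) := Real.rpow_mul hKpos.le _ _
      _ ≤ P := h4
  have hyl : (l + ε - l : ℝ) = ε := by ring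
  have hFle' : g x + c / a * P ≤ g (l + ε) + c / a * E := by
    simpa [hF, hyl, hE, hP] using hFle
  have habs1 : g (l + ε) ≤ B := le_abs_self _
  have habs2 : -g x ≤ |g x| := neg_le_abs _
  have h1 : c / (2 * a) * K = c / a * E + B := by
    rw [hK]
    field_simp
  have h2 : c / (2 * a) * K ≤ c / (2 * a) * P :=
    mul_le_mul_of_nonneg_left hPK (by positivity)
  have h3 : c / a * P = 2 * (c / (2 * a) * P) := by
    field_simp
  linarith

/-- Blow-up propagation step from the invariance part of the proof of Theorem 5.8
of the paper: if `|g'(x)| ≥ c (x-l)^{-(1+a)}` on `(l, l+ε]`, then near `l` one has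
`|g(x)| ≥ (c/(2a)) (x-l)^{-a}`. -/
theorem stmt_4 (a c l ε : ℝ) (ha0 : 0 < a) (ha1 : a < 1) (hc : 0 < c) (hε : 0 < ε)
    (g g' : ℝ → ℝ)
    (hderiv : ∀ x ∈ Set.Ioc l (l + ε), HasDerivWithinAt g (g' x) (Set.Ioc l (l + ε)) x)
    (hcont : ContinuousOn g' (Set.Ioc l (l + ε)))
    (hlow : ∀ x ∈ Set.Ioc l (l + ε), c * (x - l) ^ (-(1 + a)) ≤ |g' x|) :
    ∃ δ : ℝ, 0 < δ ∧ δ ≤ ε ∧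
      ∀ x ∈ Set.Ioc l (l + δ), c / (2 * a) * (x - l) ^ (-a) ≤ |g x| := by
  set s := Set.Ioc l (l + ε) with hs
  have hne : ∀ x ∈ s, g' x ≠ 0 := by
    intro x hx h0
    have := hlow x hx
    have hxl : 0 < x - l := sub_pos.mpr hx.1
    have : c * (x - l) ^ (-(1 + a)) ≤ 0 := by simpa [h0] using this
    nlinarith [Real.rpow_pos_of_pos hxl (-(1 + a))]
  have himg : IsPreconnected (g' '' s) :=
    (isPreconnected_Ioc).image g' hcont
  have hsub : g' '' s ⊆ Set.Iio 0 ∪ Set.Ioi 0 := by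
    rintro _ ⟨x, hx, rfl⟩
    rcases lt_or_gt_of_ne (hne x hx) with h | h
    · exact Or.inl h
    · exact Or.inr h
  rcases himg.subset_or_subset isOpen_Iio isOpen_Ioi
      ((Set.Iio_disjoint_Ici le_rfl).mono_right Set.Ioi_subset_Ici_self) hsub with hneg | hpos
  · -- g' < 0 on s; apply aux to -g
    obtain ⟨δ, hδ0, hδε, hδ⟩ := stmt_4_aux a c l ε ha0 hc hε (fun t => -g t) (fun t => -g' t)
      (fun x hx => (hderiv x hx).neg)
      (fun x hx => by
        have h := hlow x hx
        have hx0 : g' x < 0 := hneg ⟨x, hx, rfl⟩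
        rw [abs_of_neg hx0] at h
        exact h)
    exact ⟨δ, hδ0, hδε, fun x hx => by simpa using hδ x hx⟩
  · obtain ⟨δ, hδ0, hδε, hδ⟩ := stmt_4_aux a c l ε ha0 hc hε g g' hderiv
      (fun x hx => by
        have h := hlow x hx
        have hx0 : 0 < g' x := hpos ⟨x, hx, rfl⟩
        rwa [abs_of_pos hx0] at h)
    exact ⟨δ, hδ0, hδε, hδ⟩
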